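/- Let Q ⊆ H²(𝔻) be a closed subspace invariant under the backward shift M_z* (a quotient module), with Q ≠ {0}, and let C_z = P_Q M_z|_Q denote the compression of the shift to Q. Set L = ran(I_Q − C_z C_z*). Then Q equals the closed linear span of { P_Q M_z^ℓ x : ℓ ≥ 0, x ∈ L }. -/

import Mathlib

open ContinuousLinearMap
open scoped InnerProductSpace ComplexConjugate

noncomputable abbrev Hardy : Type := lp (fun _ : ℕ => ℂ) 2

namespace Stmt16Aux

noncomputable def e (n : ℕ) : Hardy := lp.single 2 n (1 : ℂ)

lemma coord (f : Hardy) (n : ℕ) : ⟪e n, f⟫_ℂ = f n := by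
  simp [e, lp.inner_single_left]

section S
variable (S : Hardy →L[ℂ] Hardy)
  (hS0 : ∀ f : Hardy, (S f : ℕ → ℂ) 0 = 0)
  (hS : ∀ (f : Hardy) (n : ℕ), (S f : ℕ → ℂ) (n + 1) = (f : ℕ → ℂ) n)

include hS0 hS in
lemma S_e (n : ℕ) : S (e n) = e (n + 1) := by
  refine lp.ext (funext fun m => ?_)
  match m with
  | 0 => rw [hS0]; simp [e, lp.single_apply]
  | m + 1 =>
      rw [hS]
      rcases eq_or_ne m n with rfl | h
      · simp [e, lp.single_apply]
      · simp [e, lp.single_apply, h, fun hh => h (Nat.succ_injective hh)]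

include hS0 hS in
lemma adjS_apply (f : Hardy) (n : ℕ) : (adjoint S f : ℕ → ℂ) n = f (n + 1) := by
  rw [← coord, adjoint_inner_right, S_e S hS0 hS, coord]

include hS0 hS in
lemma adjS_pow_apply (ℓ : ℕ) (f : Hardy) (n : ℕ) :
    (((adjoint S) ^ ℓ) f : ℕ → ℂ) n = f (n + ℓ) := by
  induction ℓ generalizing n f with
  | zero => simp
  | succ k ih =>
      have : ((adjoint S) ^ (k+1)) f = ((adjoint S) ^ k) (adjoint S f) := by
        rw [pow_succ, mul_apply_eq_comp]
      rw [this, ih, adjS_apply S hS0 hS, Nat.add_assoc]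

include hS0 hS in
lemma SadjS (f : Hardy) : S (adjoint S f) = f - (f : ℕ → ℂ) 0 • e 0 := by
  refine lp.ext (funext fun m => ?_)
  have hc : ((f - (f : ℕ → ℂ) 0 • e 0 : Hardy) : ℕ → ℂ) m
      = f m - (f : ℕ → ℂ) 0 * (e 0 : ℕ → ℂ) m := by
    rfl
  rw [hc]
  match m with
  | 0 => rw [hS0]; simp [e, lp.single_apply]
  | m + 1 =>
      rw [hS, adjS_apply S hS0 hS]
      simp [e, lp.single_apply]

lemma pow_inner (ℓ : ℕ) (v w : Hardy) :
    ⟪(S ^ ℓ) v, w⟫_ℂ = ⟪v, ((adjoint S) ^ ℓ) w⟫_ℂ := by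
  induction ℓ generalizing v w with
  | zero => simp
  | succ k ih =>
      rw [pow_succ, mul_apply_eq_comp, ih, pow_succ', mul_apply_eq_comp, adjoint_inner_right]

end S

end Stmt16Aux

set_option maxHeartbeats 2000000 in
open Stmt16Aux in
/-- Let `Q` be a nonzero quotient module of `H²(𝔻)` (a closed subspace invariant under
the backward shift `M_z*`), `C_z = P_Q M_z|_Q` the compressed shift, and
`L = ran (I_Q - C_z C_z*)`. Then `Q` is the closed linear span of
`{ P_Q M_z^ℓ x : ℓ ≥ 0, x ∈ L }`. Here `S` is the unilateral shift `M_z` on the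
coefficient model of `H²(𝔻)`. -/
theorem stmt_16
    (S : Hardy →L[ℂ] Hardy)
    (hS0 : ∀ f : Hardy, (S f : ℕ → ℂ) 0 = 0)
    (hS : ∀ (f : Hardy) (n : ℕ), (S f : ℕ → ℂ) (n + 1) = (f : ℕ → ℂ) n)
    (Q : Submodule ℂ Hardy) [CompleteSpace Q]
    (hQinv : ∀ x ∈ Q, adjoint S x ∈ Q) (hQne : Q ≠ ⊥) :
    (⊤ : Submodule ℂ Q) =
      (Submodule.span ℂ
        {y : Q | ∃ (ℓ : ℕ) (x : Q),
          x ∈ LinearMap.range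
            (((1 : Q →L[ℂ] Q) -
              ((Q.orthogonalProjectionOnto) ∘L (S ∘L Q.subtypeL)) ∘L
                adjoint ((Q.orthogonalProjectionOnto) ∘L (S ∘L Q.subtypeL)) : Q →L[ℂ] Q) : Q →ₗ[ℂ] Q) ∧
          y = Q.orthogonalProjectionOnto ((S ^ ℓ) (x : Hardy))}).topologicalClosure := by
  classical
  set P := Q.orthogonalProjectionOnto with hP
  set A : Q →L[ℂ] Q := P ∘L (S ∘L Q.subtypeL) with hA
  set u : Q := P (e 0) with hu
  -- inner products against u for elements of Q
  have hue : ∀ z : Hardy, z ∈ Q → ⟪(u : Hardy), z⟫_ℂ = z 0 := by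
    intro z hz
    have h0 := Q.starProjection_inner_eq_zero (e 0) z hz
    have : ⟪e 0, z⟫_ℂ - ⟪(u : Hardy), z⟫_ℂ = 0 := by
      rw [← inner_sub_left]; exact h0
    have h1 : ⟪(u : Hardy), z⟫_ℂ = ⟪e 0, z⟫_ℂ := by linear_combination -this
    rw [h1, coord]
  -- u ≠ 0
  have hune : u ≠ 0 := by
    intro h0
    apply hQne
    have he0 : e 0 ∈ Qᗮ := by
      rwa [← Submodule.orthogonalProjectionOnto_eq_zero_iff (K := Q)]
    have hen : ∀ n, e n ∈ Qᗮ := by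
      intro n
      induction n with
      | zero => exact he0
      | succ k ih =>
          rw [← S_e S hS0 hS]
          rw [Submodule.mem_orthogonal'] at ih ⊢
          intro x hx
          rw [← adjoint_inner_right]
          exact ih _ (hQinv x hx)
    rw [Submodule.eq_bot_iff]
    intro x hx
    refine lp.ext (funext fun n => ?_)
    have := (Submodule.mem_orthogonal' Q (e n)).mp (hen n) x hx
    rw [coord] at this
    simpa using this
  -- the adjoint of A
  have hadj : ∀ w : Q, ((adjoint A) w : Hardy) = adjoint S (w : Hardy) := by
    intro w
    have : adjoint A = (P ∘L ((adjoint S) ∘L Q.subtypeL)) := by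
      rw [hA, adjoint_comp, adjoint_comp, Q.adjoint_subtypeL, Q.adjoint_orthogonalProjectionOnto, hP]
      ext x
      simp
    rw [this]
    simp only [comp_apply, Submodule.subtypeL_apply, hP]
    exact Q.starProjection_eq_self_iff.mpr (hQinv _ w.2)
  -- the defect operator
  have hdefect : ∀ w : Q, ((1 : Q →L[ℂ] Q) - A ∘L adjoint A) w = ((w : Hardy) : ℕ → ℂ) 0 • u := by
    intro w
    have h2 : A ((adjoint A) w) = P (S (adjoint S (w : Hardy))) := by
      rw [show A ((adjoint A) w) = P (S ((adjoint A) w : Hardy)) from rfl, hadj w]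
    have h3 : S (adjoint S (w : Hardy)) =
        (w : Hardy) - ((w : Hardy) : ℕ → ℂ) 0 • e 0 := SadjS S hS0 hS (w : Hardy)
    have h4 : A ((adjoint A) w) = w - ((w : Hardy) : ℕ → ℂ) 0 • u := by
      rw [h2, h3, map_sub, map_smul, hu, hP]
      congr 1
      exact Submodule.orthogonalProjectionOnto_mem_subspace_eq_self w
    rw [ContinuousLinearMap.sub_apply, comp_apply, ContinuousLinearMap.one_apply]
    · rw [h4]; abel
  have hpowmem : ∀ (ℓ : ℕ) (f : Hardy), f ∈ Q → ((adjoint S) ^ ℓ) f ∈ Q := by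
    intro ℓ
    induction ℓ with
    | zero => intro f hf; simpa using hf
    | succ k ih =>
        intro f hf
        have h5 : ((adjoint S) ^ (k+1)) f = adjoint S (((adjoint S) ^ k) f) := by
          rw [pow_succ', mul_apply_eq_comp]
        rw [h5]
        exact hQinv _ (ih f hf)
  -- main argument
  symm
  rw [Submodule.topologicalClosure_eq_top_iff, Submodule.eq_bot_iff]
  intro q hq
  set c : ℂ := ((u : Hardy) : ℕ → ℂ) 0 with hc
  have hcu : c = ⟪(u : Hardy), (u : Hardy)⟫_ℂ := by rw [hc, hue _ u.2]
  have hcne : c ≠ 0 := by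
    rw [hcu]
    simpa [inner_self_eq_zero] using hune
  have hcoords : ∀ ℓ : ℕ, ((q : Hardy) : ℕ → ℂ) ℓ = 0 := by
    intro ℓ
    -- the generator
    have hmem : (P ((S ^ ℓ) ((c • u : Q) : Hardy))) ∈
        Submodule.span ℂ
        {y : Q | ∃ (ℓ : ℕ) (x : Q),
          x ∈ LinearMap.range
            (((1 : Q →L[ℂ] Q) - A ∘L adjoint A : Q →L[ℂ] Q) : Q →ₗ[ℂ] Q) ∧
          y = P ((S ^ ℓ) (x : Hardy))} := by
      refine Submodule.subset_span ⟨ℓ, c • u, ⟨u, ?_⟩, rfl⟩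
      rw [hc]
      exact hdefect u
    have h0 : ⟪P ((S ^ ℓ) ((c • u : Q) : Hardy)), q⟫_ℂ = 0 :=
      (Submodule.mem_orthogonal _ q).mp hq _ hmem
    -- rewrite the inner product
    have h1 : ⟪P ((S ^ ℓ) ((c • u : Q) : Hardy)), q⟫_ℂ
        = ⟪(S ^ ℓ) ((c • u : Q) : Hardy), (q : Hardy)⟫_ℂ := by
      rw [Submodule.coe_inner]
      have := Q.starProjection_inner_eq_zero ((S ^ ℓ) ((c • u : Q) : Hardy)) (q : Hardy) q.2
      rw [inner_sub_left, sub_eq_zero] at this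
      rw [hP]
      exact this.symm
    have hz : ((adjoint S) ^ ℓ) (q : Hardy) ∈ Q := hpowmem ℓ (q : Hardy) q.2
    have h2 : ⟪(S ^ ℓ) ((c • u : Q) : Hardy), (q : Hardy)⟫_ℂ
        = conj c * (((q : Hardy) : ℕ → ℂ) ℓ) := by
      rw [pow_inner S]
      have hcoe : ((c • u : Q) : Hardy) = c • (u : Hardy) := rfl
      rw [hcoe, inner_smul_left, hue _ hz, adjS_pow_apply S hS0 hS]
      simp
    rw [h1, h2] at h0
    exact (mul_eq_zero.mp h0).resolve_left (by simpa using hcne)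
  have : (q : Hardy) = 0 := lp.ext (funext fun ℓ => by simpa using hcoords ℓ)
  exact Submodule.coe_eq_zero.mp this
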